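/- Let (V,Q) be a metric vector space such that the polar form B of Q is non-degenerate, let Q^↑(a₀,a*) := Q(D⁻¹(a*)), and let c ∈ F^×. Then AO(V,Q)^β = O'((F×V)*, c·Q^↑), i.e., the β-image of the motion group of (V,Q) equals the weak orthogonal group of the metric vector space ((F×V)*, c·Q^↑). -/

import Mathlib

/-! Setting: a field `F` and a finite-dimensional `F`-vector space `V`. The dual of
`F × V` is identified with `F × V*` via the pairing `⟨(a₀,a*),(x₀,x)⟩ = a₀x₀ + ⟨a*,x⟩`.
For a quadratic form `Q`, its polar form is `QuadraticMap.polar Q` (the bilinear map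
`Q.polarBilin`) and its radical is `LinearMap.ker Q.polarBilin`. -/

variable {F V : Type*} [Field F] [AddCommGroup V] [Module F V] [FiniteDimensional F V]

/-- The dual linear representation `β` of `AGL(V)` on `(F×V)* = F × V*`: for the affinity
`γ : x ↦ t + g x` (with `g ∈ GL(V)`, `t ∈ V`),
`γ^β (a₀, a*) = (a₀ - ⟨a* ∘ g⁻¹, t⟩, a* ∘ g⁻¹)`. -/
def betaMap (g : V ≃ₗ[F] V) (t : V) :
    (F × Module.Dual F V) →ₗ[F] (F × Module.Dual F V) :=
  LinearMap.prod
    (LinearMap.fst F F (Module.Dual F V) -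
      (Module.Dual.eval F V (g.symm t)).comp (LinearMap.snd F F (Module.Dual F V)))
    ((g.symm.toLinearMap.dualMap).comp (LinearMap.snd F F (Module.Dual F V)))

/-- Given a quadratic form `Q` on `V` whose induced map `D = Q.polarBilin` is bijective
(given here as the linear equivalence `e` with `↑e = Q.polarBilin`), the quadratic form
`Q^↑ : F × V* → F, (a₀, a*) ↦ Q (D⁻¹ a*)`. -/
def qUp (Q : QuadraticForm F V) (e : V ≃ₗ[F] Module.Dual F V) :
    QuadraticForm F (F × Module.Dual F V) :=
  Q.comp (e.symm.toLinearMap ∘ₗ LinearMap.snd F F (Module.Dual F V))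

/-- Given a quadratic form `Q̃` on `F × V*` such that `π ∘ D̃ ∘ π^T : V* → V` is invertible
(given here as the linear equivalence `T`, characterised by
`∀ a b, b (T a) = polar Q̃ (0,a) (0,b)`), the quadratic form
`Q̃^↓ : V → F, x ↦ Q̃ (0, T⁻¹ x)`. -/
def qDown (Qt : QuadraticForm F (F × Module.Dual F V)) (T : Module.Dual F V ≃ₗ[F] V) :
    QuadraticForm F V :=
  Qt.comp ((LinearMap.inr F F (Module.Dual F V)) ∘ₗ T.symm.toLinearMap)

/-- The weak orthogonal group `O'(W,Q)` of a metric vector space, as a set of linear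
endomorphisms: bijective isometries fixing the radical elementwise. -/
def wOrth {W : Type*} [AddCommGroup W] [Module F W] (Qt : QuadraticForm F W) :
    Set (W →ₗ[F] W) :=
  {φ | Function.Bijective φ ∧ (∀ w, Qt (φ w) = Qt w) ∧
    ∀ w ∈ LinearMap.ker Qt.polarBilin, φ w = w}

/-- The `β`-image `AO(V,Q)^β` of the motion group of `(V,Q)`. -/
def motionBetaSet (Q : QuadraticForm F V) :
    Set ((F × Module.Dual F V) →ₗ[F] (F × Module.Dual F V)) :=
  {φ | ∃ (g : V ≃ₗ[F] V) (t : V), (∀ x, Q (g x) = Q x) ∧ φ = betaMap g t}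

/-- The `β`-image `AO'(V,Q)^β` of the weak motion group of `(V,Q)`. -/
def wMotionBetaSet (Q : QuadraticForm F V) :
    Set ((F × Module.Dual F V) →ₗ[F] (F × Module.Dual F V)) :=
  {φ | ∃ (g : V ≃ₗ[F] V) (t : V), (∀ x, Q (g x) = Q x) ∧
    (∀ x ∈ LinearMap.ker Q.polarBilin, g x = x) ∧ φ = betaMap g t}

set_option linter.unusedSectionVars false

lemma stmt14aux_polar_eq (Q : QuadraticForm F V) (e : V ≃ₗ[F] Module.Dual F V)
    (he : (e : V →ₗ[F] Module.Dual F V) = Q.polarBilin) (x y : V) :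
    QuadraticMap.polar Q x y = e x y := by
  rw [← QuadraticMap.polarBilin_apply_apply, ← he]; rfl

lemma stmt14aux_polarBilin_cqUp (Q : QuadraticForm F V) (e : V ≃ₗ[F] Module.Dual F V)
    (he : (e : V →ₗ[F] Module.Dual F V) = Q.polarBilin)
    (c : F) (z w : F × Module.Dual F V) :
    (c • qUp Q e).polarBilin z w = c * z.2 (e.symm w.2) := by
  simp only [QuadraticMap.polarBilin_apply_apply, qUp, QuadraticMap.polar_smul,
    QuadraticMap.polar, QuadraticMap.comp_apply, smul_eq_mul, QuadraticMap.smul_apply,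
    LinearMap.coe_comp, Function.comp_apply, LinearMap.snd_apply, LinearEquiv.coe_coe,
    Prod.snd_add, map_add]
  have := stmt14aux_polar_eq Q e he (e.symm z.2) (e.symm w.2)
  simp only [QuadraticMap.polar, LinearEquiv.apply_symm_apply] at this
  rw [show Q (e.symm z.2 + e.symm w.2) = z.2 (e.symm w.2) + Q (e.symm z.2) + Q (e.symm w.2) from by
    rw [sub_eq_iff_eq_add, sub_eq_iff_eq_add] at this; rw [this]; ring]
  ring

lemma stmt14aux_mem_rad_iff (Q : QuadraticForm F V) (e : V ≃ₗ[F] Module.Dual F V)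
    (he : (e : V →ₗ[F] Module.Dual F V) = Q.polarBilin)
    (c : F) (hc : c ≠ 0) (z : F × Module.Dual F V) :
    z ∈ LinearMap.ker (c • qUp Q e).polarBilin ↔ z.2 = 0 := by
  rw [LinearMap.mem_ker]
  constructor
  · intro h
    ext v
    have := congrFun (congrArg DFunLike.coe h) (0, e v)
    rw [stmt14aux_polarBilin_cqUp Q e he] at this
    simpa [hc] using this
  · intro h
    refine LinearMap.ext fun w => ?_
    rw [stmt14aux_polarBilin_cqUp Q e he]
    simp [h]

lemma stmt14aux_iso_polar (Q : QuadraticForm F V) (g : V ≃ₗ[F] V) (hg : ∀ x, Q (g x) = Q x) (x y : V) :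
    QuadraticMap.polar Q (g x) (g y) = QuadraticMap.polar Q x y := by
  simp only [QuadraticMap.polar, ← map_add g, hg]

lemma stmt14aux_key_symm (Q : QuadraticForm F V) (e : V ≃ₗ[F] Module.Dual F V)
    (he : (e : V →ₗ[F] Module.Dual F V) = Q.polarBilin)
    (g : V ≃ₗ[F] V) (hg : ∀ x, Q (g x) = Q x) (a : Module.Dual F V) :
    e.symm (g.symm.toLinearMap.dualMap a) = g (e.symm a) := by
  rw [LinearEquiv.symm_apply_eq]
  refine LinearMap.ext fun y => ?_
  rw [← stmt14aux_polar_eq Q e he]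
  symm
  calc QuadraticMap.polar Q (g (e.symm a)) y
      = QuadraticMap.polar Q (g (e.symm a)) (g (g.symm y)) := by rw [g.apply_symm_apply]
    _ = QuadraticMap.polar Q (e.symm a) (g.symm y) := stmt14aux_iso_polar Q g hg _ _
    _ = e (e.symm a) (g.symm y) := stmt14aux_polar_eq Q e he _ _
    _ = a (g.symm y) := by rw [e.apply_symm_apply]
    _ = g.symm.toLinearMap.dualMap a y := rfl

lemma stmt14aux_fwd (Q : QuadraticForm F V) (e : V ≃ₗ[F] Module.Dual F V)
    (he : (e : V →ₗ[F] Module.Dual F V) = Q.polarBilin)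
    (c : F) (hc : c ≠ 0) (g : V ≃ₗ[F] V) (t : V) (hg : ∀ x, Q (g x) = Q x) :
    Function.Bijective (betaMap g t) ∧
      (∀ w, (c • qUp Q e) (betaMap g t w) = (c • qUp Q e) w) ∧
      ∀ w ∈ LinearMap.ker (c • qUp Q e).polarBilin, betaMap g t w = w := by
  refine ⟨?_, ?_, ?_⟩
  · have hinj : Function.Injective (betaMap g t) := by
      rw [← LinearMap.ker_eq_bot, LinearMap.ker_eq_bot']
      intro z hz
      have h2 : g.symm.toLinearMap.dualMap z.2 = 0 := congrArg Prod.snd hz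
      have h2' : z.2 = 0 := by
        ext v
        have := congrFun (congrArg DFunLike.coe h2) (g v)
        simpa using this
      have h1 : z.1 = 0 := by
        have := congrArg Prod.fst hz
        simpa [betaMap, h2'] using this
      exact Prod.ext h1 h2'
    exact ⟨hinj, LinearMap.injective_iff_surjective.mp hinj⟩
  · intro w
    simp only [betaMap, QuadraticMap.smul_apply, qUp, QuadraticMap.comp_apply,
      LinearMap.prod_apply, LinearMap.coe_comp, Function.comp_apply, LinearMap.snd_apply,
      LinearEquiv.coe_coe, Function.prod, smul_eq_mul]
    rw [stmt14aux_key_symm Q e he g hg, hg]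
  · intro w hw
    rw [stmt14aux_mem_rad_iff Q e he c hc] at hw
    apply Prod.ext <;> simp [betaMap, hw]

lemma stmt14aux_bwd (Q : QuadraticForm F V) (e : V ≃ₗ[F] Module.Dual F V)
    (he : (e : V →ₗ[F] Module.Dual F V) = Q.polarBilin)
    (c : F) (hc : c ≠ 0) (φ : (F × Module.Dual F V) →ₗ[F] (F × Module.Dual F V))
    (hbij : Function.Bijective φ)
    (hiso : ∀ w, (c • qUp Q e) (φ w) = (c • qUp Q e) w)
    (hrad : ∀ w ∈ LinearMap.ker (c • qUp Q e).polarBilin, φ w = w) :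
    ∃ (g : V ≃ₗ[F] V) (t : V), (∀ x, Q (g x) = Q x) ∧ φ = betaMap g t := by
  have hfix : ∀ a₀ : F, φ (a₀, 0) = (a₀, 0) := fun a₀ =>
    hrad _ ((stmt14aux_mem_rad_iff Q e he c hc _).mpr rfl)
  set h₀ : Module.Dual F V →ₗ[F] Module.Dual F V :=
    (LinearMap.snd F F (Module.Dual F V)) ∘ₗ φ ∘ₗ LinearMap.inr F F (Module.Dual F V) with hh₀
  have hsnd : ∀ z, (φ z).2 = h₀ z.2 := by
    intro z
    have : z = (z.1, 0) + ((0 : F), z.2) := by simp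
    rw [this, map_add, Prod.snd_add, hfix]
    simp [hh₀]
  have hfstl : ∀ z, (φ z).1 = z.1 + (φ (0, z.2)).1 := by
    intro z
    have : z = (z.1, 0) + ((0 : F), z.2) := by simp
    rw [this, map_add, Prod.fst_add, hfix]
    simp
  have hQ : ∀ a, Q (e.symm (h₀ a)) = Q (e.symm a) := by
    intro a
    have := hiso (0, a)
    simp only [QuadraticMap.smul_apply, qUp, QuadraticMap.comp_apply, LinearMap.coe_comp,
      Function.comp_apply, LinearMap.snd_apply, LinearEquiv.coe_coe, smul_eq_mul] at this
    rw [hsnd (0, a)] at this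
    exact mul_left_cancel₀ hc this
  have hpol : ∀ a b, (h₀ a) (e.symm (h₀ b)) = a (e.symm b) := by
    intro a b
    have key : (c • qUp Q e).polarBilin (φ (0, a)) (φ (0, b))
        = (c • qUp Q e).polarBilin (0, a) (0, b) := by
      simp only [QuadraticMap.polarBilin_apply_apply, QuadraticMap.polar, ← map_add φ, hiso]
    rw [stmt14aux_polarBilin_cqUp Q e he, stmt14aux_polarBilin_cqUp Q e he, hsnd (0, a), hsnd (0, b)] at key
    exact mul_left_cancel₀ hc key
  have hinj : Function.Injective h₀ := by
    rw [← LinearMap.ker_eq_bot, LinearMap.ker_eq_bot']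
    intro a ha
    have h1 : φ ((0 : F), a) = φ ((φ ((0 : F), a)).1, 0) := by
      rw [hfix]
      refine Prod.ext rfl ?_
      rw [hsnd, ha]
    have := hbij.1 h1
    have := congrArg Prod.snd this
    simpa using this
  set H : Module.Dual F V ≃ₗ[F] Module.Dual F V :=
    LinearEquiv.ofBijective h₀ ⟨hinj, LinearMap.injective_iff_surjective.mp hinj⟩ with hH
  set g : V ≃ₗ[F] V := e.trans (H.trans e.symm) with hgdef
  have hgx : ∀ x, g x = e.symm (h₀ (e x)) := fun x => rfl
  have hgiso : ∀ x, Q (g x) = Q x := by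
    intro x
    rw [hgx, hQ, e.symm_apply_apply]
  have hgsymm : ∀ (a : Module.Dual F V) (y : V), a (g.symm y) = (h₀ a) y := by
    intro a y
    have hy : e.symm (h₀ (H.symm (e y))) = y := by
      have : h₀ (H.symm (e y)) = H (H.symm (e y)) := rfl
      rw [this, H.apply_symm_apply, e.symm_apply_apply]
    have hgs : g.symm y = e.symm (H.symm (e y)) := by
      simp [hgdef]
    rw [hgs]
    calc a (e.symm (H.symm (e y)))
        = (h₀ a) (e.symm (h₀ (H.symm (e y)))) := (hpol a _).symm
      _ = (h₀ a) y := by rw [hy]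
  set ℓ : Module.Dual F V →ₗ[F] F :=
    (LinearMap.fst F F (Module.Dual F V)) ∘ₗ φ ∘ₗ LinearMap.inr F F (Module.Dual F V) with hℓ
  set s : V := (Module.evalEquiv F V).symm (-ℓ) with hs
  have hsa : ∀ a : Module.Dual F V, a s = -(ℓ a) := by
    intro a
    have : Module.Dual.eval F V s = -ℓ := by
      rw [hs, ← Module.evalEquiv_toLinearMap]
      exact (Module.evalEquiv F V).apply_symm_apply _
    have := congrFun (congrArg DFunLike.coe this) a
    simpa using this
  refine ⟨g, g s, hgiso, ?_⟩
  refine LinearMap.ext fun z => Prod.ext ?_ ?_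
  · have h1 : (betaMap g (g s) z).1 = z.1 - z.2 (g.symm (g s)) := rfl
    rw [h1, g.symm_apply_apply, hsa, hfstl]
    simp [hℓ]
  · have h2 : (betaMap g (g s) z).2 = g.symm.toLinearMap.dualMap z.2 := rfl
    rw [h2, hsnd]
    exact LinearMap.ext fun y => ((hgsymm z.2 y).symm : _)


/-- Proposition 5.2: if the polar form of `Q` is non-degenerate (its induced map being the
linear equivalence `e`) and `c ∈ F^×`, then `AO(V,Q)^β = O'((F×V)*, c • Q^↑)`. -/
theorem stmt14 (Q : QuadraticForm F V) (e : V ≃ₗ[F] Module.Dual F V)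
    (he : (e : V →ₗ[F] Module.Dual F V) = Q.polarBilin)
    (c : F) (hc : c ≠ 0) :
    motionBetaSet Q = wOrth (c • qUp Q e) := by
  ext φ
  constructor
  · rintro ⟨g, t, hg, rfl⟩
    exact stmt14aux_fwd Q e he c hc g t hg
  · rintro ⟨hbij, hiso, hrad⟩
    exact stmt14aux_bwd Q e he c hc φ hbij hiso hrad
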